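/- Let n ≥ 2 and m ≥ 2 be integers, let λ₁, …, λₙ be positive real numbers, and let A > 0. For nonnegative reals A₁, …, Aₙ with A₁ + ⋯ + Aₙ = A, define rᵢ = m·λᵢ·Aᵢ^{1/(m−1)}. Then λ₁A₁^{m/(m−1)} + ⋯ + λₙAₙ^{m/(m−1)} attains its minimum over all such (A₁, …, Aₙ) if and only if r₁ = r₂ = ⋯ = rₙ. -/

import Mathlib

open Finset

/-- Tangent line inequality for `x ^ p`, `p > 1`, on the nonnegative reals. -/
lemma tangent_le {p : ℝ} (hp : 1 < p) {a y : ℝ} (ha : 0 ≤ a) (hy : 0 ≤ y) :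
    a ^ p + p * a ^ (p - 1) * (y - a) ≤ y ^ p := by
  rcases eq_or_lt_of_le ha with rfl | h0
  · simp [Real.zero_rpow (show p ≠ 0 by linarith),
      Real.zero_rpow (show p - 1 ≠ 0 by linarith)]
    positivity
  · have ha' : a ≠ 0 := ne_of_gt h0
    have hs : -1 ≤ y / a - 1 := by
      have : 0 ≤ y / a := div_nonneg hy h0.le
      linarith
    have hB := one_add_mul_self_le_rpow_one_add hs hp.le
    have h1 : (1 : ℝ) + (y / a - 1) = y / a := by ring
    rw [h1] at hB
    have hap : 0 < a ^ p := Real.rpow_pos_of_pos h0 p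
    have hmul := mul_le_mul_of_nonneg_right hB hap.le
    have hdr : (y / a) ^ p * a ^ p = y ^ p := by
      rw [← Real.mul_rpow (div_nonneg hy h0.le) h0.le, div_mul_cancel₀ _ ha']
    have hpa : a ^ p = a ^ (p - 1) * a := by
      rw [← Real.rpow_add_one ha' (p - 1), sub_add_cancel]
    have hsplit : (1 + p * (y / a - 1)) * a ^ p = a ^ p + p * a ^ (p - 1) * (y - a) := by
      rw [hpa]
      field_simp
    rw [hsplit, hdr] at hmul
    exact hmul

/-- Sum of a doubly-updated function. -/
lemma sum_update2 {n : ℕ} (g : Fin n → ℝ) {i j : Fin n} (hij : i ≠ j) (x y : ℝ) :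
    ∑ k, Function.update (Function.update g i x) j y k = ∑ k, g k + (x - g i) + (y - g j) := by
  rw [Finset.sum_update_of_mem (Finset.mem_univ j),
    Finset.sum_update_of_mem (show i ∈ Finset.univ \ {j} by simp [hij])]
  have h1 : ∑ k, g k = g j + ∑ k ∈ Finset.univ \ {j}, g k := by
    rw [Finset.sum_eq_sum_sdiff_singleton_add (Finset.mem_univ j)]
    ring
  have h2 : ∑ k ∈ Finset.univ \ {j}, g k
      = g i + ∑ k ∈ (Finset.univ \ {j}) \ {i}, g k := by
    rw [Finset.sum_eq_sum_sdiff_singleton_add (show i ∈ Finset.univ \ {j} by simp [hij])]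
    ring
  linarith

/-- Sum of a pointwise function of a doubly-updated function. -/
lemma sum_update2' {n : ℕ} (f : Fin n → ℝ → ℝ) (h : Fin n → ℝ) {i j : Fin n} (hij : i ≠ j)
    (x y : ℝ) :
    ∑ k, f k (Function.update (Function.update h i x) j y k)
      = ∑ k, f k (h k) + (f i x - f i (h i)) + (f j y - f j (h j)) := by
  have e1 : ∀ k : Fin n, f k (Function.update (Function.update h i x) j y k)
      = Function.update (Function.update (fun k => f k (h k)) i (f i x)) j (f j y) k := by
    intro k
    by_cases hkj : k = j
    · subst hkj; simp
    · by_cases hki : k = i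
      · subst hki; simp [Function.update_of_ne hkj]
      · simp [Function.update_of_ne hkj, Function.update_of_ne hki]
  rw [Finset.sum_congr rfl (fun k _ => e1 k), sum_update2 _ hij]

/-- Corollary 3 (analytic content, dimension `m`): with `rᵢ = m λᵢ Aᵢ^{1/(m−1)}`
(the inradius of a hypersphere or convex tangential polytope of surface area `Aᵢ` in
class `[λᵢ]`), the total volume `∑ λᵢ Aᵢ^{m/(m−1)}` attains its minimum over all
nonnegative `(A₁,…,Aₙ)` with `∑ Aᵢ = A` iff `r₁ = r₂ = ⋯ = rₙ`. -/
theorem stmt_16 (n m : ℕ) (hn : 2 ≤ n) (hm : 2 ≤ m) (lam : Fin n → ℝ)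
    (hlam : ∀ i, 0 < lam i) (A : ℝ) (hA : 0 < A)
    (As : Fin n → ℝ) (hAs : ∀ i, 0 ≤ As i) (hsum : ∑ i, As i = A)
    (r : Fin n → ℝ) (hr : ∀ i, r i = m * lam i * As i ^ ((1 : ℝ) / ((m : ℝ) - 1))) :
    (∀ y : Fin n → ℝ, (∀ i, 0 ≤ y i) → ∑ i, y i = A →
        ∑ i, lam i * As i ^ ((m : ℝ) / ((m : ℝ) - 1)) ≤
          ∑ i, lam i * y i ^ ((m : ℝ) / ((m : ℝ) - 1))) ↔
      ∀ i j, r i = r j := by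
  have hm2 : (2 : ℝ) ≤ (m : ℝ) := by exact_mod_cast hm
  have hm0 : (0 : ℝ) < (m : ℝ) - 1 := by linarith
  have hmpos : (0 : ℝ) < (m : ℝ) := by linarith
  set q : ℝ := 1 / ((m : ℝ) - 1) with hq
  set p : ℝ := (m : ℝ) / ((m : ℝ) - 1) with hp
  have hq0 : 0 < q := by rw [hq]; positivity
  have hp1 : 1 < p := by
    rw [hp, lt_div_iff₀ hm0]; linarith
  have hpq : p - 1 = q := by
    rw [hp, hq]; field_simp; ring
  constructor
  · -- minimality implies equal radii
    intro hmin i j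
    by_contra hne
    have key : ∀ i j : Fin n, r i < r j → False := by
      clear hne i j
      intro i j hij
      have hij' : i ≠ j := by
        rintro rfl; exact lt_irrefl _ hij
      have hb0 : 0 < As j := by
        rcases eq_or_lt_of_le (hAs j) with h | h
        · exfalso
          rw [hr i, hr j, ← h, Real.zero_rpow (ne_of_gt hq0)] at hij
          have h1 : 0 ≤ (m : ℝ) * lam i * As i ^ q :=
            mul_nonneg (mul_nonneg hmpos.le (hlam i).le) (Real.rpow_nonneg (hAs i) q)
          nlinarith
        · exact h
      set a := As i with hadef
      set b := As j with hbdef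
      have hab : lam i * a ^ q < lam j * b ^ q := by
        rw [hr i, hr j, mul_assoc, mul_assoc] at hij
        exact lt_of_mul_lt_mul_left hij hmpos.le
      -- choose a small perturbation ε
      have hcont : ContinuousAt (fun e : ℝ => lam j * (b - e) ^ q - lam i * (a + e) ^ q) 0 := by
        apply ContinuousAt.sub
        · exact continuousAt_const.mul
            ((continuousAt_const.sub continuousAt_id).rpow_const (Or.inr hq0.le))
        · exact continuousAt_const.mul
            ((continuousAt_const.add continuousAt_id).rpow_const (Or.inr hq0.le))
      have h0 : (0 : ℝ) < lam j * (b - 0) ^ q - lam i * (a + 0) ^ q := by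
        simpa using sub_pos.mpr hab
      have hev := hcont (Ioi_mem_nhds h0)
      rw [Filter.mem_map, Metric.mem_nhds_iff] at hev
      obtain ⟨δ, hδ0, hδ⟩ := hev
      set ε : ℝ := min (δ / 2) (b / 2) with hε
      have hε0 : 0 < ε := lt_min (by linarith) (by linarith)
      have hεb : ε < b := lt_of_le_of_lt (min_le_right _ _) (by linarith)
      have hεδ : ε ∈ Metric.ball (0 : ℝ) δ := by
        rw [Metric.mem_ball, Real.dist_eq, sub_zero, abs_of_pos hε0]
        exact lt_of_le_of_lt (min_le_left _ _) (by linarith)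
      have hfε : 0 < lam j * (b - ε) ^ q - lam i * (a + ε) ^ q := hδ hεδ
      -- the perturbed configuration
      set y : Fin n → ℝ := Function.update (Function.update As i (a + ε)) j (b - ε) with hy
      have hy0 : ∀ k, 0 ≤ y k := by
        intro k
        rw [hy]
        by_cases hkj : k = j
        · subst hkj; simp; linarith
        · rw [Function.update_of_ne hkj]
          by_cases hki : k = i
          · rw [hki, Function.update_self]; linarith [hAs i]
          · rw [Function.update_of_ne hki]; exact hAs k
      have hysum : ∑ k, y k = A := by
        rw [hy, sum_update2 As hij', hsum, ← hadef, ← hbdef]; ring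
      have hcontr := hmin y hy0 hysum
      rw [hy, sum_update2' (fun k t => lam k * t ^ p) As hij'] at hcontr
      -- tangent line bounds at the perturbed points
      have t1 := tangent_le hp1 (show (0:ℝ) ≤ a + ε by linarith [hAs i]) (hAs i)
      have t2' := tangent_le hp1 (show (0:ℝ) ≤ b - ε by linarith) (show (0:ℝ) ≤ b from hAs j)
      rw [hpq] at t1 t2'
      -- t1 : (a+ε)^p + p*(a+ε)^q*(a - (a+ε)) ≤ a^p
      have k1 : lam i * ((a + ε) ^ p + p * (a + ε) ^ q * (a - (a + ε)))
          ≤ lam i * a ^ p := mul_le_mul_of_nonneg_left t1 (hlam i).le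
      have k2 : lam j * ((b - ε) ^ p + p * (b - ε) ^ q * (b - (b - ε)))
          ≤ lam j * b ^ p := mul_le_mul_of_nonneg_left t2' (hlam j).le
      have k4 : 0 < p * ε * (lam j * (b - ε) ^ q - lam i * (a + ε) ^ q) := by
        apply mul_pos (by positivity) hfε
      nlinarith [k1, k2, k4, hcontr]
    rcases lt_or_gt_of_ne hne with h | h
    · exact key i j h
    · exact key j i h
  · -- equal radii implies minimality
    intro heq y hy0 hysum
    have hn0 : 0 < n := lt_of_lt_of_le two_pos hn
    set i0 : Fin n := ⟨0, hn0⟩ with hi0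
    set c : ℝ := lam i0 * As i0 ^ q with hc
    have hck : ∀ k, lam k * As k ^ q = c := by
      intro k
      have h := heq k i0
      rw [hr k, hr i0, mul_assoc, mul_assoc] at h
      exact mul_left_cancel₀ (ne_of_gt hmpos) h
    have key : ∀ k, lam k * As k ^ p + p * c * (y k - As k) ≤ lam k * y k ^ p := by
      intro k
      have t := tangent_le hp1 (hAs k) (hy0 k)
      rw [hpq] at t
      have t' := mul_le_mul_of_nonneg_left t (hlam k).le
      calc lam k * As k ^ p + p * c * (y k - As k)
          = lam k * (As k ^ p + p * As k ^ q * (y k - As k)) := by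
            rw [← hck k]; ring
        _ ≤ lam k * y k ^ p := t'
    have hsumle := Finset.sum_le_sum (fun k (_ : k ∈ Finset.univ) => key k)
    rw [Finset.sum_add_distrib] at hsumle
    have hz : ∑ k, p * c * (y k - As k) = 0 := by
      rw [← Finset.mul_sum, Finset.sum_sub_distrib, hysum, hsum]; ring
    linarith
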